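/- Let G be a finite group whose Sylow p-subgroup is abelian, and let H be a normal p-subgroup of G. Then N(H ⋊ G/H) ⊆ N(G), where H ⋊ G/H is the semidirect product with respect to the natural conjugation action of G/H on H. -/

import Mathlib

/-!
Common definitions: the set `N(G)` of conjugacy class sizes, `A`-groups,
the largest `p`-power `|G||_p` dividing an element of `N(G)`, the Fitting subgroup,
and the natural conjugation action of `G ⧸ H` on an abelian normal subgroup `H`
(used to form the semidirect product `H ⋊ G/H`).
-/

/-- `N(G)`: the set of conjugacy class sizes (indices of centralizers) of `G`. -/
def indexSet (G : Type*) [Group G] : Set ℕ :=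
  {n | ∃ x : G, n = (Subgroup.centralizer {x}).index}

/-- A finite group is an `A`-group if all its Sylow subgroups are abelian. -/
def IsAGroup (G : Type*) [Group G] : Prop :=
  ∀ (p : ℕ), p.Prime → ∀ P : Sylow p G, ∀ a b : (P : Subgroup G), a * b = b * a

/-- `|G||_p`: the highest power of `p` dividing some element of `N(G)`. -/
noncomputable def maxPPart (G : Type*) [Group G] (p : ℕ) : ℕ :=
  sSup {m | (∃ k : ℕ, m = p ^ k) ∧ ∃ n ∈ indexSet G, m ∣ n}

open scoped Classical in
/-- The natural action of `G ⧸ H` on an abelian normal subgroup `H`, induced by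
conjugation (`h ↦ g * h * g⁻¹`); it is used to form the semidirect product `H ⋊ G/H`.
(Junk value — the trivial action — if `H` is not abelian; see `quotConj_eq` below.) -/
noncomputable def quotConj (G : Type*) [Group G] (H : Subgroup G) [H.Normal] :
    G ⧸ H →* MulAut ↥H :=
  if h : H ≤ (MulAut.conjNormal (H := H)).ker then
    QuotientGroup.lift H MulAut.conjNormal h
  else 1

/-- When `H` is abelian, `quotConj` is indeed the conjugation action `h ↦ g * h * g⁻¹`. -/
theorem quotConj_eq (G : Type*) [Group G] (H : Subgroup G) [H.Normal]
    (hab : ∀ a b : ↥H, a * b = b * a) (g : G) :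
    quotConj G H (g : G ⧸ H) = MulAut.conjNormal g := by
  have hker : H ≤ (MulAut.conjNormal (H := H)).ker := by
    intro x hx
    rw [MonoidHom.mem_ker]
    ext y
    have h2 : x * (y : G) = (y : G) * x := congrArg Subtype.val (hab ⟨x, hx⟩ y)
    simp only [MulAut.conjNormal_apply, MulAut.one_apply]
    rw [mul_inv_eq_iff_eq_mul]
    exact h2
  rw [quotConj, dif_pos hker]
  rfl

/-- The Fitting subgroup: the join of all normal nilpotent subgroups. -/
def fitting (G : Type*) [Group G] : Subgroup G :=
  ⨆ H ∈ {H : Subgroup G | H.Normal ∧ Group.IsNilpotent ↥H}, H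

instance fitting_normal (G : Type*) [Group G] : (fitting G).Normal := by
  constructor
  intro n hn g
  rw [fitting, iSup_subtype'] at hn ⊢
  refine Subgroup.iSup_induction _
    (C := fun x => g * x * g⁻¹ ∈
      ⨆ H : {H : Subgroup G | H.Normal ∧ Group.IsNilpotent ↥H}, (H : Subgroup G))
    hn (fun H x hx => ?_) ?_ (fun x y hx hy => ?_)
  · exact Subgroup.mem_iSup_of_mem H (H.2.1.conj_mem x hx g)
  · simpa using Subgroup.one_mem _
  · have h2 := Subgroup.mul_mem _ hx hy
    have h3 : g * (x * y) * g⁻¹ = (g * x * g⁻¹) * (g * y * g⁻¹) := by group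
    show g * (x * y) * g⁻¹ ∈ _
    rwa [h3]


set_option linter.unusedSectionVars false
set_option linter.unusedVariables false

section Aux

variable {p : ℕ} {G : Type*} [Group G] [Finite G] {H : Subgroup G} [H.Normal]

/-- a p-element -/
def IsPElem (p : ℕ) {G : Type*} [Group G] (z : G) : Prop := ∃ k : ℕ, z ^ p ^ k = 1

lemma isPGroup_zpowers_of_pelem {z : G} (hz : IsPElem p z) :
    IsPGroup p (Subgroup.zpowers z) := by
  obtain ⟨k, hk⟩ := hz
  intro g
  obtain ⟨i, hi⟩ := g.2
  refine ⟨k, ?_⟩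
  ext
  push_cast
  rw [← hi, ← zpow_natCast, ← zpow_mul, mul_comm, zpow_mul, zpow_natCast, hk, one_zpow]

lemma aux_le_sylow (hp : p.Prime) (hHp : IsPGroup p ↥H) (P : Sylow p G) : H ≤ ↑P := by
  haveI := Fact.mk hp
  obtain ⟨Q, hQ⟩ := hHp.exists_le_sylow
  obtain ⟨x, hx⟩ := MulAction.exists_smul_eq G Q P
  intro h hh
  rw [← hx, Sylow.smul_def, Sylow.pointwise_smul_def]
  rw [Subgroup.mem_pointwise_smul_iff_inv_smul_mem]
  exact hQ (by simpa using Subgroup.Normal.conj_mem ‹H.Normal› h hh x⁻¹)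

lemma aux_habG (hp : p.Prime)
    (hSyl : ∀ P : Sylow p G, ∀ a b : ↥(P : Subgroup G), a * b = b * a)
    (hHp : IsPGroup p ↥H) : ∀ a ∈ H, ∀ b ∈ H, a * b = b * a := by
  intro a ha b hb
  obtain ⟨P⟩ := (Sylow.nonempty : Nonempty (Sylow p G))
  have hle := aux_le_sylow hp hHp P
  exact congrArg Subtype.val (hSyl P ⟨a, hle ha⟩ ⟨b, hle hb⟩)

lemma aux_pelem_comm (hp : p.Prime)
    (hSyl : ∀ P : Sylow p G, ∀ a b : ↥(P : Subgroup G), a * b = b * a)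
    (hHp : IsPGroup p ↥H) {z : G} (hz : IsPElem p z) :
    ∀ h ∈ H, z * h = h * z := by
  intro h hh
  obtain ⟨P, hP⟩ := (isPGroup_zpowers_of_pelem hz).exists_le_sylow
  exact congrArg Subtype.val
    (hSyl P ⟨z, hP (Subgroup.mem_zpowers z)⟩ ⟨h, aux_le_sylow hp hHp P hh⟩)

-- commuting in quotient
lemma mk_comm_iff {z w : G} :
    ((z : G ⧸ H) * w = w * z) ↔ z * w * z⁻¹ * w⁻¹ ∈ H := by
  rw [← QuotientGroup.eq_one_iff]
  simp only [QuotientGroup.mk_mul, QuotientGroup.mk_inv]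
  constructor
  · intro h; rw [h]; group
  · intro h
    have : (z : G ⧸ H) * w * (↑z)⁻¹ * (↑w)⁻¹ * (↑w * ↑z) = 1 * (↑w * ↑z) := by rw [h]
    calc (z : G ⧸ H) * w = ↑z * ↑w * (↑z)⁻¹ * (↑w)⁻¹ * (↑w * ↑z) := by group
    _ = ↑w * ↑z := by rw [this, one_mul]

lemma aux_pelem_comm2 (hp : p.Prime)
    (hSyl : ∀ P : Sylow p G, ∀ a b : ↥(P : Subgroup G), a * b = b * a)
    (hHp : IsPGroup p ↥H) {z w : G} (hz : IsPElem p z) (hw : IsPElem p w)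
    (hcomm : z * w * z⁻¹ * w⁻¹ ∈ H) : z * w = w * z := by
  haveI := Fact.mk hp
  set zb : G ⧸ H := (z : G ⧸ H)
  set wb : G ⧸ H := (w : G ⧸ H)
  have hzw : zb * wb = wb * zb := mk_comm_iff.mpr hcomm
  have hcom : ∀ i j : ℤ, Commute (zb ^ i) (wb ^ j) := fun i j =>
    (Commute.zpow_zpow (hzw) i j)
  -- the join is a p-group
  have hV : IsPGroup p (Subgroup.zpowers zb ⊔ Subgroup.zpowers wb : Subgroup (G ⧸ H)) := by
    refine IsPGroup.to_sup_of_normal_right'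
      (isPGroup_zpowers_of_pelem ?_) (isPGroup_zpowers_of_pelem ?_) ?_
    · obtain ⟨k, hk⟩ := hz; exact ⟨k, by rw [← QuotientGroup.mk_pow, hk, QuotientGroup.mk_one]⟩
    · obtain ⟨k, hk⟩ := hw; exact ⟨k, by rw [← QuotientGroup.mk_pow, hk, QuotientGroup.mk_one]⟩
    · intro y hy
      rw [Subgroup.mem_normalizer_iff]
      intro v
      obtain ⟨i, hi⟩ := hy
      constructor
      · rintro ⟨j, hj⟩
        refine ⟨j, ?_⟩
        rw [← hi, ← hj]
        rw [(hcom i j).eq]; group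
      · rintro ⟨j, hj⟩
        refine ⟨j, ?_⟩
        have : v = y⁻¹ * (y * v * y⁻¹) * y := by group
        show wb ^ j = _
        simp only at hj hi
        rw [this, ← hj, ← hi, (hcom i j).inv_left.eq]; group
  -- pull back
  set U : Subgroup G := (Subgroup.zpowers zb ⊔ Subgroup.zpowers wb).comap (QuotientGroup.mk' H)
  have hU : IsPGroup p ↥U := by
    rintro ⟨u, hu⟩
    obtain ⟨k, hk⟩ := hV ⟨QuotientGroup.mk u, hu⟩
    have hk' : ((u ^ p ^ k : G) : G ⧸ H) = 1 := by
      have := congrArg Subtype.val hk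
      push_cast at this
      simpa using this
    obtain ⟨j, hj⟩ := hHp ⟨u ^ p ^ k, (QuotientGroup.eq_one_iff _).mp hk'⟩
    refine ⟨k + j, ?_⟩
    ext
    have := congrArg Subtype.val hj
    push_cast at this ⊢
    rw [pow_add, pow_mul]
    simpa using this
  obtain ⟨P, hP⟩ := hU.exists_le_sylow
  have hzU : z ∈ U := Subgroup.mem_comap.mpr (Subgroup.mem_sup_left (Subgroup.mem_zpowers zb))
  have hwU : w ∈ U := Subgroup.mem_comap.mpr (Subgroup.mem_sup_right (Subgroup.mem_zpowers wb))
  exact congrArg Subtype.val (hSyl P ⟨z, hP hzU⟩ ⟨w, hP hwU⟩)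

end Aux

section Work
variable {p : ℕ} {G : Type*} [Group G] [Finite G] {H : Subgroup G} [H.Normal]

abbrev commH (hab : ∀ a b : ↥H, a * b = b * a) : CommGroup ↥H :=
  { (inferInstance : Group ↥H) with mul_comm := hab }

def fhom (g : G) (hab : ∀ a b : ↥H, a * b = b * a) : ↥H →* ↥H :=
  letI := commH (H := H) hab
  (MonoidHom.id ↥H) / (MulAut.conjNormal g).toMonoidHom

lemma fhom_apply (g : G) (hab : ∀ a b : ↥H, a * b = b * a) (h : ↥H) :
    fhom g hab h = h * (MulAut.conjNormal g h)⁻¹ := by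
  letI := commH (H := H) hab
  rw [show fhom g hab h = (MonoidHom.id ↥H) h / (MulAut.conjNormal g).toMonoidHom h from rfl]
  rw [div_eq_mul_inv]
  rfl

lemma fhom_val (g : G) (hab : ∀ a b : ↥H, a * b = b * a) (h : ↥H) :
    (fhom g hab h : G) = (h : G) * (g * (h : G)⁻¹ * g⁻¹) := by
  rw [fhom_apply]
  push_cast
  rw [MulAut.conjNormal_apply]
  group

lemma conj_conj_comm (habG : ∀ a ∈ H, ∀ b ∈ H, a * b = b * a) {g z : G}
    (hz : z * g * z⁻¹ * g⁻¹ ∈ H) :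
    ∀ h ∈ H, (z * g) * h * (z * g)⁻¹ = (g * z) * h * (g * z)⁻¹ := by
  intro h hh
  have hw : (g * z) * h * (g * z)⁻¹ ∈ H := by
    have := Subgroup.Normal.conj_mem ‹H.Normal› h hh (g * z)
    simpa [mul_assoc] using this
  have key := habG _ hz _ hw
  set d := z * g * z⁻¹ * g⁻¹ with hd
  have h1 : z * g = d * (g * z) := by rw [hd]; group
  calc (z * g) * h * (z * g)⁻¹ = d * ((g * z) * h * (g * z)⁻¹) * d⁻¹ := by
        rw [h1]; group
    _ = ((g * z) * h * (g * z)⁻¹) * d * d⁻¹ := by rw [key]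
    _ = (g * z) * h * (g * z)⁻¹ := by group

lemma conjNormal_fhom_comm (habG : ∀ a ∈ H, ∀ b ∈ H, a * b = b * a)
    {g : G} (hab : ∀ a b : ↥H, a * b = b * a) {z : G}
    (hz : z * g * z⁻¹ * g⁻¹ ∈ H) (h : ↥H) :
    MulAut.conjNormal z (fhom g hab h) = fhom g hab (MulAut.conjNormal z h) := by
  ext
  rw [MulAut.conjNormal_apply, fhom_val, fhom_val, MulAut.conjNormal_apply]
  have key := conj_conj_comm habG hz (h : G)⁻¹ (inv_mem h.2)
  calc z * ((h:G) * (g * (h:G)⁻¹ * g⁻¹)) * z⁻¹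
      = (z * h * z⁻¹) * ((z*g) * (h:G)⁻¹ * (z*g)⁻¹) := by group
    _ = (z * h * z⁻¹) * ((g*z) * (h:G)⁻¹ * (g*z)⁻¹) := by rw [key]
    _ = z * h * z⁻¹ * (g * (z * (h:G) * z⁻¹)⁻¹ * g⁻¹) := by group

lemma mem_range_of_norm_one (hp : p.Prime) (hHp : IsPGroup p ↥H)
    (hab : ∀ a b : ↥H, a * b = b * a) {g2 : G} (hm2 : ¬ p ∣ orderOf g2)
    {c2 : ↥H}
    (hN : (List.ofFn (fun i : Fin (orderOf g2) =>
        MulAut.conjNormal (g2 ^ (i : ℕ)) c2)).prod = 1) :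
    c2 ∈ (fhom g2 hab).range := by
  letI := commH (H := H) hab
  set m2 := orderOf g2 with hm2def
  have hN' : (∏ i ∈ Finset.range m2, MulAut.conjNormal (g2 ^ i) c2) = 1 := by
    rw [← Fin.prod_univ_eq_prod_range, ← List.prod_ofFn]
    exact hN
  set Nrm : ↥H →* ↥H :=
    ∏ i ∈ Finset.range m2, ((MulAut.conjNormal (g2 ^ i)).toMonoidHom : ↥H →* ↥H) with hNrm
  have hconj_pow : ∀ (i : ℕ) (h : ↥H),
      MulAut.conjNormal (g2 ^ i) (MulAut.conjNormal g2 h)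
        = MulAut.conjNormal (g2 ^ (i + 1)) h := by
    intro i h
    rw [pow_succ, map_mul]
    rfl
  have hrange : ∀ h : ↥H, Nrm (fhom g2 hab h) = 1 := by
    intro h
    rw [hNrm, MonoidHom.finset_prod_apply]
    have hterm : ∀ i ∈ Finset.range m2,
        ((MulAut.conjNormal (g2 ^ i)).toMonoidHom : ↥H →* ↥H) (fhom g2 hab h)
          = (fun j => MulAut.conjNormal (g2 ^ j) h) i
            / (fun j => MulAut.conjNormal (g2 ^ j) h) (i + 1) := by
      intro i _
      simp only [MulEquiv.coe_toMonoidHom]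
      rw [fhom_apply, div_eq_mul_inv, ← hconj_pow i h, map_mul, map_inv]
    rw [Finset.prod_congr rfl hterm, Finset.prod_range_div']
    simp only [pow_zero, hm2def, pow_orderOf_eq_one, map_one, MulAut.one_apply, div_self']
  have hfixpow : ∀ h : ↥H, fhom g2 hab h = 1 →
      ∀ i : ℕ, MulAut.conjNormal (g2 ^ i) h = h := by
    intro h hh
    have hfix : MulAut.conjNormal g2 h = h := by
      rw [fhom_apply] at hh
      have := mul_inv_eq_one.mp hh
      exact this.symm
    intro i
    induction i with
    | zero => simp
    | succ n ih => rw [← hconj_pow n h, hfix, ih]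
  have hker : ∀ h : ↥H, fhom g2 hab h = 1 → Nrm h = h ^ m2 := by
    intro h hh
    rw [hNrm, MonoidHom.finset_prod_apply]
    rw [Finset.prod_congr rfl (fun i _ => by
      simpa only [MulEquiv.coe_toMonoidHom] using hfixpow h hh i)]
    simp [Finset.prod_const, Finset.card_range]
  have htrivial : ∀ h : ↥H, fhom g2 hab h = 1 → Nrm h = 1 → h = 1 := by
    intro h h1 h2
    have hpow : h ^ m2 = 1 := by rw [← hker h h1, h2]
    have hord1 : orderOf h ∣ m2 := orderOf_dvd_of_pow_eq_one hpow
    obtain ⟨k, hk⟩ := hHp h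
    have hord2 : orderOf h ∣ p ^ k := orderOf_dvd_of_pow_eq_one hk
    have hc : Nat.Coprime (p ^ k) m2 :=
      Nat.Coprime.pow_left _ ((Nat.Prime.coprime_iff_not_dvd hp).mpr hm2)
    have hdvd1 : orderOf h ∣ 1 := by
      have := Nat.dvd_gcd hord2 hord1
      rwa [Nat.Coprime.gcd_eq_one hc] at this
    rw [← orderOf_eq_one_iff]
    exact Nat.eq_one_of_dvd_one hdvd1 ▸ rfl
  set ψ : ↥(Nrm.ker) →* (↥H ⧸ (fhom g2 hab).ker) :=
    (QuotientGroup.mk' (fhom g2 hab).ker).comp (Nrm.ker.subtype) with hψ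
  have hinj : Function.Injective ψ := by
    rw [← MonoidHom.ker_eq_bot_iff, eq_bot_iff]
    rintro x hx
    have hx' : (x : ↥H) ∈ (fhom g2 hab).ker := by
      have : ψ x = 1 := hx
      rw [hψ] at this
      simpa [MonoidHom.mem_ker, QuotientGroup.eq_one_iff] using this
    have hx1 : (x : ↥H) = 1 :=
      htrivial _ hx' (x.2 : Nrm (x : ↥H) = 1)
    simpa [Subgroup.mem_bot] using Subtype.ext hx1
  have hcard : Nat.card ↥(Nrm.ker) ≤ Nat.card ↥((fhom g2 hab).range) := by
    calc Nat.card ↥(Nrm.ker) ≤ Nat.card (↥H ⧸ (fhom g2 hab).ker) :=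
          Nat.card_le_card_of_injective ψ hinj
    _ = Nat.card ↥((fhom g2 hab).range) :=
          Nat.card_congr (QuotientGroup.quotientKerEquivRange _).toEquiv
  have hle : ((fhom g2 hab).range : Set ↥H) ⊆ (Nrm.ker : Set ↥H) := by
    rintro x ⟨y, rfl⟩
    exact hrange y
  have hEq : ((fhom g2 hab).range : Set ↥H) = (Nrm.ker : Set ↥H) := by
    apply Set.eq_of_subset_of_ncard_le hle ?_ (Set.toFinite _)
    rw [← Nat.card_coe_set_eq, ← Nat.card_coe_set_eq]
    exact hcard
  have hmem : c2 ∈ (Nrm.ker : Set ↥H) := by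
    show c2 ∈ Nrm.ker
    rw [MonoidHom.mem_ker, hNrm, MonoidHom.finset_prod_apply]
    simpa using hN'
  rw [← hEq] at hmem
  exact hmem

lemma aux_A (hp : p.Prime)
    (hSyl : ∀ P : Sylow p G, ∀ a b : ↥(P : Subgroup G), a * b = b * a)
    (hHp : IsPGroup p ↥H) (hab : ∀ a b : ↥H, a * b = b * a)
    {g z : G} (hz : IsPElem p z) (hK : z * g * z⁻¹ * g⁻¹ ∈ H) :
    (⟨z * g * z⁻¹ * g⁻¹, hK⟩ : ↥H) ∈ (fhom g hab).range := by
  -- order decomposition of g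
  set n := orderOf g with hn
  have hn0 : n ≠ 0 := (orderOf_pos g).ne'
  set α := n.factorization p with hα
  set np := p ^ α with hnp
  set m := n / np with hm
  have hnm : np * m = n := Nat.ordProj_mul_ordCompl_eq_self n p
  have hpm : ¬ p ∣ m := Nat.not_dvd_ordCompl hp hn0
  have hcop : Nat.Coprime np m :=
    Nat.Coprime.pow_left _ ((Nat.Prime.coprime_iff_not_dvd hp).mpr hpm)
  have hm0 : m ≠ 0 := by
    intro h0
    rw [h0, Nat.mul_zero] at hnm
    exact hn0 hnm.symm
  obtain ⟨c, hc⟩ : ∃ c, (np * c) % m = 1 % m := by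
    rcases eq_or_ne m 1 with h1 | h1
    · exact ⟨0, by simp [h1]⟩
    · have hm1 : 1 < m := lt_of_le_of_ne (Nat.one_le_iff_ne_zero.mpr hm0) (Ne.symm h1)
      obtain ⟨c, hc⟩ := Nat.exists_mul_mod_eq_one_of_coprime hcop hm1
      exact ⟨c, by rw [hc.2, Nat.mod_eq_of_lt hm1]⟩
  have hMod : (np * c) ≡ 1 [MOD m] := hc
  obtain ⟨e, he⟩ : (m : ℤ) ∣ (1 : ℤ) - (np * c : ℕ) := hMod.dvd
  set g2 := g ^ (np * c) with hg2
  set g1 := g * g2⁻¹ with hg1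
  have hg : g = g1 * g2 := by rw [hg1]; group
  have hg2m : g2 ^ m = 1 := by
    rw [hg2, ← pow_mul]
    exact orderOf_dvd_iff_pow_eq_one.mp ⟨c, by rw [← hn, ← hnm]; ring⟩
  have hordg2 : orderOf g2 ∣ m := orderOf_dvd_of_pow_eq_one hg2m
  have hpg2 : ¬ p ∣ orderOf g2 := fun hd => hpm (hd.trans hordg2)
  have hg1z : g1 = g ^ ((1 : ℤ) - (np * c : ℕ)) := by
    rw [hg1, hg2, zpow_sub, zpow_one, zpow_natCast]
  have hg1p : IsPElem p g1 := by
    refine ⟨α, ?_⟩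
    rw [hg1z, ← hnp, ← zpow_natCast, ← zpow_mul, he,
      show (m : ℤ) * e * (np : ℤ) = (n : ℤ) * (e) * 1 by rw [← hnm]; push_cast; ring]
    rw [mul_one, zpow_mul, zpow_natCast, pow_orderOf_eq_one, one_zpow]
  -- the subgroup of elements commuting with z mod H
  set J := Subgroup.comap (QuotientGroup.mk' H) (Subgroup.centralizer {((z : G) : G ⧸ H)}) with hJ
  have hmemJ : ∀ w : G, w ∈ J ↔ z * w * z⁻¹ * w⁻¹ ∈ H := by
    intro w
    rw [hJ, Subgroup.mem_comap, Subgroup.mem_centralizer_iff]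
    simp only [Set.mem_singleton_iff, forall_eq]
    exact mk_comm_iff
  have hgJ : g ∈ J := (hmemJ g).mpr hK
  have hg2J : g2 ∈ J := by rw [hg2]; exact pow_mem hgJ _
  have hg1J : g1 ∈ J := mul_mem hgJ (inv_mem hg2J)
  have hK2 : z * g2 * z⁻¹ * g2⁻¹ ∈ H := (hmemJ g2).mp hg2J
  have hK1 : z * g1 * z⁻¹ * g1⁻¹ ∈ H := (hmemJ g1).mp hg1J
  have hzg1 : z * g1 = g1 * z := aux_pelem_comm2 hp hSyl hHp hz hg1p hK1
  have hg1H : ∀ h ∈ H, g1 * h = h * g1 := aux_pelem_comm hp hSyl hHp hg1p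
  set c2 : ↥H := ⟨z * g2 * z⁻¹ * g2⁻¹, hK2⟩ with hc2
  have hval : z * g * z⁻¹ * g⁻¹ = (c2 : G) := by
    have h4 : g1 * (z * g2 * z⁻¹ * g2⁻¹) * g1⁻¹ = (z * g2 * z⁻¹ * g2⁻¹) := by
      rw [hg1H _ hK2]; group
    calc z * g * z⁻¹ * g⁻¹ = (z * g1) * (g2 * z⁻¹ * g2⁻¹ * g1⁻¹) := by rw [hg]; group
      _ = (g1 * z) * (g2 * z⁻¹ * g2⁻¹ * g1⁻¹) := by rw [hzg1]
      _ = g1 * (z * g2 * z⁻¹ * g2⁻¹) * g1⁻¹ := by group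
      _ = (c2 : G) := by rw [h4]
  have hfeq : fhom g hab = fhom g2 hab := by
    apply MonoidHom.ext
    intro h
    apply Subtype.ext
    rw [fhom_val, fhom_val]
    have hmem : g2 * (h : G)⁻¹ * g2⁻¹ ∈ H := by
      have := Subgroup.Normal.conj_mem ‹H.Normal› _ (inv_mem h.2) g2
      simpa [mul_assoc] using this
    have : g1 * (g2 * (h : G)⁻¹ * g2⁻¹) * g1⁻¹ = g2 * (h : G)⁻¹ * g2⁻¹ := by
      rw [hg1H _ hmem]; group
    calc (h:G) * (g * (h : G)⁻¹ * g⁻¹) = (h:G) * (g1 * (g2 * (h:G)⁻¹ * g2⁻¹) * g1⁻¹) := by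
          rw [hg]; group
      _ = (h:G) * (g2 * (h : G)⁻¹ * g2⁻¹) := by rw [this]
  have hNone : (List.ofFn (fun i : Fin (orderOf g2) =>
      MulAut.conjNormal (g2 ^ (i : ℕ)) c2)).prod = 1 := by
    have claim : ∀ j : ℕ, z * g2 ^ j * z⁻¹ =
        (((List.ofFn (fun i : Fin j => MulAut.conjNormal (g2 ^ (i : ℕ)) c2)).prod : ↥H) : G)
          * g2 ^ j := by
      intro j
      induction j with
      | zero => simp
      | succ jj ih =>
        have hstep : z * g2 ^ (jj + 1) * z⁻¹ = (z * g2 ^ jj * z⁻¹) * (z * g2 * z⁻¹) := by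
          rw [pow_succ]; group
        have hzg2 : z * g2 * z⁻¹ = (c2 : G) * g2 := by rw [hc2]; group
        have hofn : (List.ofFn (fun i : Fin (jj + 1) =>
            MulAut.conjNormal (g2 ^ (i : ℕ)) c2)).prod
            = (List.ofFn (fun i : Fin jj => MulAut.conjNormal (g2 ^ (i : ℕ)) c2)).prod
              * MulAut.conjNormal (g2 ^ jj) c2 := by
          rw [List.ofFn_succ']
          simp
        rw [hstep, ih, hzg2, hofn]
        push_cast
        rw [MulAut.conjNormal_apply]
        group
    have hfin := claim (orderOf g2)
    rw [pow_orderOf_eq_one, mul_one, mul_one] at hfin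
    have hone : (((List.ofFn (fun i : Fin (orderOf g2) =>
        MulAut.conjNormal (g2 ^ (i : ℕ)) c2)).prod : ↥H) : G) = 1 := by
      rw [← hfin]; group
    exact Subtype.ext hone
  obtain ⟨u, hu⟩ := mem_range_of_norm_one hp hHp hab hpg2 hNone
  exact ⟨u, by rw [hfeq, hu]; exact Subtype.ext hval.symm⟩

lemma aux_B (hp : p.Prime)
    (hSyl : ∀ P : Sylow p G, ∀ a b : ↥(P : Subgroup G), a * b = b * a)
    (hHp : IsPGroup p ↥H) (hab : ∀ a b : ↥H, a * b = b * a) (g : G) :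
    ∃ t : ↥H, ∀ z : G, ∀ hz : z * g * z⁻¹ * g⁻¹ ∈ H,
      ∃ u : ↥H, (⟨z * g * z⁻¹ * g⁻¹, hz⟩ : ↥H)
        = (MulAut.conjNormal z t)⁻¹ * t * fhom g hab u := by
  letI := commH (H := H) hab
  haveI := Fact.mk hp
  have habG := aux_habG hp hSyl hHp
  set I := (fhom g hab).range with hI
  set M := (↥H ⧸ I) with hM
  letI : CommGroup M :=
    { (inferInstance : Group M) with
      mul_comm := fun a b => QuotientGroup.induction_on a (fun a' =>
        QuotientGroup.induction_on b (fun b' => by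
          rw [← QuotientGroup.mk_mul, ← QuotientGroup.mk_mul, hab])) }
  set K := Subgroup.comap (QuotientGroup.mk' H)
      (Subgroup.centralizer {((g : G) : G ⧸ H)}) with hKdef
  have hmemK : ∀ w : G, w ∈ K ↔ w * g * w⁻¹ * g⁻¹ ∈ H := by
    intro w
    rw [hKdef, Subgroup.mem_comap, Subgroup.mem_centralizer_iff]
    simp only [Set.mem_singleton_iff, forall_eq, QuotientGroup.mk'_apply]
    rw [← mk_comm_iff]
    exact ⟨Eq.symm, Eq.symm⟩
  have hIpres : ∀ z : G, z * g * z⁻¹ * g⁻¹ ∈ H →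
      ∀ x : ↥H, x ∈ I → (MulAut.conjNormal z).toMonoidHom x ∈ I := by
    rintro z hzK x ⟨y, rfl⟩
    exact ⟨MulAut.conjNormal z y, (conjNormal_fhom_comm habG hab hzK y).symm⟩
  set ρ : ∀ _ : ↥K, M →* M := fun z => QuotientGroup.map I I
      (MulAut.conjNormal (z : G)).toMonoidHom
      (fun x hx => Subgroup.mem_comap.mpr (hIpres (z : G) ((hmemK _).mp z.2) x hx)) with hρ
  have hρ_mk : ∀ (z : ↥K) (x : ↥H),
      ρ z (QuotientGroup.mk x) = QuotientGroup.mk (MulAut.conjNormal (z : G) x) := by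
    intro z x
    rw [hρ]
    rfl
  set δ : ↥K → M := fun z =>
    QuotientGroup.mk (⟨(z : G) * g * (z : G)⁻¹ * g⁻¹, (hmemK _).mp z.2⟩ : ↥H) with hδdef
  have hδmul : ∀ z w : ↥K, δ (z * w) = ρ z (δ w) * δ z := by
    intro z w
    rw [hδdef]
    simp only
    rw [hρ_mk, ← QuotientGroup.mk_mul]
    apply congrArg
    apply Subtype.ext
    push_cast [MulAut.conjNormal_apply]
    group
  -- Sylow subgroup of K
  obtain ⟨S⟩ : Nonempty (Sylow p ↥K) := Sylow.nonempty
  have hδS : ∀ s : ↥K, s ∈ (S : Subgroup ↥K) → δ s = 1 := by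
    intro s hs
    obtain ⟨k, hk⟩ := S.2 ⟨s, hs⟩
    have hpe : IsPElem p (s : G) := by
      refine ⟨k, ?_⟩
      have := congrArg (Subtype.val) (congrArg (Subtype.val) hk)
      push_cast at this
      exact_mod_cast this
    have := aux_A hp hSyl hHp hab (g := g) hpe ((hmemK _).mp s.2)
    rw [hδdef]
    simp only
    rw [QuotientGroup.eq_one_iff]
    exact this
  -- function on coset space
  set Y := (↥K ⧸ (S : Subgroup ↥K)) with hY
  have hconst : ∀ a b : ↥K, (QuotientGroup.leftRel (S : Subgroup ↥K)) a b → δ a = δ b := by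
    intro a b hab'
    have hs : a⁻¹ * b ∈ (S : Subgroup ↥K) := (QuotientGroup.leftRel_apply).mp hab'
    have hb : b = a * (a⁻¹ * b) := by group
    rw [hb, hδmul, hδS _ hs, map_one, one_mul]
  set δt : Y → M := Quotient.lift δ hconst with hδt
  have hδt_mk : ∀ w : ↥K, δt (QuotientGroup.mk w) = δ w := fun w => rfl
  letI : Fintype Y := Fintype.ofFinite Y
  set Sig : M := ∏ y : Y, δt y with hSig
  set n := Nat.card Y with hn
  have hcardY : n = Fintype.card Y := Nat.card_eq_fintype_card
  have hsmul : ∀ (z : ↥K) (y : Y), δt (z • y) = ρ z (δt y) * δ z := by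
    intro z y
    refine QuotientGroup.induction_on y (fun w => ?_)
    exact hδmul z w
  have hre : ∀ z : ↥K, Sig = ρ z Sig * (δ z) ^ n := by
    intro z
    have h1 : ∏ y : Y, δt (z • y) = Sig := by
      rw [hSig]
      exact Equiv.prod_comp (MulAction.toPerm z) δt
    calc Sig = ∏ y : Y, δt (z • y) := h1.symm
      _ = ∏ y : Y, (ρ z (δt y) * δ z) := by
          exact Finset.prod_congr rfl (fun y _ => hsmul z y)
      _ = (∏ y : Y, ρ z (δt y)) * (∏ _y : Y, δ z) := Finset.prod_mul_distrib
      _ = ρ z Sig * (δ z) ^ n := by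
          rw [← map_prod, ← hSig, Finset.prod_const, Finset.card_univ, hcardY]
  -- n is coprime to p
  have hpn : ¬ p ∣ n := by
    have hrel : (S : Subgroup ↥K).relIndex (Subgroup.normalizer ((S : Subgroup ↥K) : Set ↥K)) ≠ 0 := by
      rw [Subgroup.relIndex]
      exact Subgroup.index_ne_zero_of_finite
    have := Sylow.not_dvd_index' S hrel
    rwa [Subgroup.index] at this
  -- M is a p-group
  have hMp : IsPGroup p M := IsPGroup.to_quotient hHp I
  obtain ⟨j, hj⟩ := (IsPGroup.iff_card).mp hMp
  have hcop : Nat.Coprime n (Nat.card M) := by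
    rw [hj]
    exact Nat.Coprime.pow_right _ ((Nat.Prime.coprime_iff_not_dvd hp).mpr hpn).symm
  have key : ∃ tb : M, ∀ z : ↥K, δ z = (ρ z tb)⁻¹ * tb := by
    rcases eq_or_lt_of_le (Nat.one_le_iff_ne_zero.mpr (Nat.card_pos (α := M)).ne') with h1 | h1
    · -- trivial M
      refine ⟨1, fun z => ?_⟩
      haveI : Subsingleton M := (Nat.card_eq_one_iff_unique.mp h1.symm).1
      exact Subsingleton.elim _ _
    · obtain ⟨k, hk⟩ := Nat.exists_mul_mod_eq_one_of_coprime hcop h1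
      have hpow : ∀ x : M, x ^ (n * k) = x := by
        intro x
        have hdvd : orderOf x ∣ Nat.card M := orderOf_dvd_natCard x
        have hmod : (n * k) % orderOf x = 1 % orderOf x := by
          have h2 : (n * k) ≡ 1 [MOD Nat.card M] := by
            rw [Nat.ModEq, hk.2, Nat.mod_eq_of_lt h1]
          exact (Nat.ModEq.of_dvd hdvd h2)
        calc x ^ (n * k) = x ^ ((n * k) % orderOf x) := (pow_mod_orderOf x _).symm
          _ = x ^ (1 % orderOf x) := by rw [hmod]
          _ = x ^ 1 := pow_mod_orderOf x 1
          _ = x := pow_one x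
      refine ⟨Sig ^ k, fun z => ?_⟩
      have h2 : (δ z) ^ n = (ρ z Sig)⁻¹ * Sig := by
        rw [eq_inv_mul_iff_mul_eq]
        exact (hre z).symm
      calc δ z = (δ z ^ n) ^ k := by rw [← pow_mul, hpow]
        _ = ((ρ z Sig)⁻¹ * Sig) ^ k := by rw [h2]
        _ = (ρ z (Sig ^ k))⁻¹ * Sig ^ k := by
            rw [mul_pow, inv_pow, map_pow]
  obtain ⟨tb, htb⟩ := key
  obtain ⟨t, ht⟩ := QuotientGroup.mk_surjective tb
  refine ⟨t, fun z hz => ?_⟩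
  set zz : ↥K := ⟨z, (hmemK z).mpr hz⟩ with hzz
  have h3 := htb zz
  rw [← ht, hρ_mk, hδdef] at h3
  simp only at h3
  rw [← QuotientGroup.mk_inv, ← QuotientGroup.mk_mul] at h3
  have h4 := QuotientGroup.eq.mp h3
  obtain ⟨u, hu⟩ := h4
  refine ⟨u⁻¹, ?_⟩
  have h5 : (⟨z * g * z⁻¹ * g⁻¹, hz⟩ : ↥H)⁻¹ * ((MulAut.conjNormal z t)⁻¹ * t) = fhom g hab u :=
    hu.symm
  rw [map_inv, ← h5]
  group

end Work


theorem stmt_7 (p : ℕ) (hp : p.Prime) (G : Type*) [Group G] [Finite G]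
    (hSyl : ∀ P : Sylow p G, ∀ a b : ↥(P : Subgroup G), a * b = b * a)
    (H : Subgroup G) [H.Normal] (hHp : IsPGroup p ↥H) :
    indexSet (SemidirectProduct ↥H (G ⧸ H) (quotConj G H)) ⊆ indexSet G := by
  haveI := Fact.mk hp
  have habG := aux_habG hp hSyl hHp
  have hHab : ∀ a b : ↥H, a * b = b * a := fun a b => Subtype.ext (habG _ a.2 _ b.2)
  intro nval hnval
  obtain ⟨xh, hxh⟩ := hnval
  obtain ⟨a, q⟩ := xh
  obtain ⟨g, hg⟩ := QuotientGroup.mk_surjective q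
  subst hg
  obtain ⟨t, htB⟩ := aux_B hp hSyl hHp hHab g
  set y : G := ↑a * ↑t * g with hy
  set Ghat := SemidirectProduct ↥H (G ⧸ H) (quotConj G H) with hGhat
  set xhat : Ghat := ⟨a, ((g : G) : G ⧸ H)⟩ with hxhat
  set C1 := Subgroup.centralizer {xhat} with hC1def
  set C2 := Subgroup.centralizer {y} with hC2def
  have Eprod : (↥H × (G ⧸ H)) ≃ Ghat :=
    { toFun := fun pr => ⟨pr.1, pr.2⟩
      invFun := fun s => (s.left, s.right)
      left_inv := fun pr => rfl
      right_inv := fun s => by cases s; rfl }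
  haveI : Finite Ghat := Finite.of_equiv _ Eprod
  have hcardG : Nat.card Ghat = Nat.card G := by
    rw [← Nat.card_congr Eprod, Nat.card_prod,
      Subgroup.card_eq_card_quotient_mul_card_subgroup H, Nat.mul_comm]
  have hφg : quotConj G H ((g : G) : G ⧸ H) = MulAut.conjNormal g := quotConj_eq G H hHab g
  have hfib : ∀ u : G ⧸ H,
      Nonempty ({s : ↥C1 // (s : Ghat).right = u} ≃ {z : ↥C2 // ((z : G) : G ⧸ H) = u}) := by
    intro u
    have hky : ((y : G) : G ⧸ H) = ((g : G) : G ⧸ H) := by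
      rw [hy, QuotientGroup.mk_mul, QuotientGroup.mk_mul,
        (QuotientGroup.eq_one_iff _).mpr a.2, (QuotientGroup.eq_one_iff _).mpr t.2,
        one_mul, one_mul]
    by_cases hcomm : u * ((g : G) : G ⧸ H) = ((g : G) : G ⧸ H) * u
    · -- commuting case
      obtain ⟨x, hx⟩ := QuotientGroup.mk_surjective u
      subst hx
      have hφu : quotConj G H ((x : G) : G ⧸ H) = MulAut.conjNormal x :=
        quotConj_eq G H hHab x
      have hxK : x * g * x⁻¹ * g⁻¹ ∈ H := mk_comm_iff.mp hcomm
      obtain ⟨u0, hu0⟩ := htB x hxK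
      letI := commH (H := H) hHab
      set a' : ↥H := a * t with ha'
      set c : ↥H := (⟨x * g * x⁻¹ * g⁻¹, hxK⟩ : ↥H) with hc
      set w1 : ↥H := a * (MulAut.conjNormal x a)⁻¹ with hw1
      set v : ↥H := a' * (MulAut.conjNormal x a')⁻¹ * c⁻¹ with hv
      have hyval : ((a' : ↥H) : G) * g = y := by
        rw [hy, ha']
        push_cast
        rfl
      have hiffA : ∀ b : ↥H,
          (a * MulAut.conjNormal g b = b * MulAut.conjNormal x a) ↔
            fhom g hHab b = w1 := by
        intro b
        rw [fhom_apply, hw1]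
        calc (a * MulAut.conjNormal g b = b * MulAut.conjNormal x a)
            ↔ b * MulAut.conjNormal x a = a * MulAut.conjNormal g b := eq_comm
          _ ↔ b = a * MulAut.conjNormal g b * (MulAut.conjNormal x a)⁻¹ :=
              (eq_mul_inv_iff_mul_eq).symm
          _ ↔ b = a * (MulAut.conjNormal x a)⁻¹ * MulAut.conjNormal g b := by
              rw [mul_right_comm]
          _ ↔ b * (MulAut.conjNormal g b)⁻¹ = a * (MulAut.conjNormal x a)⁻¹ :=
              (mul_inv_eq_iff_eq_mul).symm
      have cond_iff : ∀ (z : G), z * g * z⁻¹ * g⁻¹ ∈ H → ∀ h0 : ↥H, z = x * ↑h0 →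
          ((y * z = z * y) ↔ fhom g hHab (MulAut.conjNormal x h0) = v) := by
        intro z hzH h0 hzh
        set dz : ↥H := (⟨z * g * z⁻¹ * g⁻¹, hzH⟩ : ↥H) with hdz
        have s1 : (y * z = z * y) ↔ z * y * z⁻¹ = y := by
          constructor
          · intro hh; rw [← hh]; group
          · intro hh
            calc y * z = (z * y * z⁻¹) * z := by rw [hh]
              _ = z * y := by group
        have s2 : z * y * z⁻¹ = ((MulAut.conjNormal z a' * dz : ↥H) : G) * g := by
          push_cast [MulAut.conjNormal_apply, hdz]
          rw [hy, ha']
          push_cast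
          group
        have s3 : MulAut.conjNormal z a' = MulAut.conjNormal x a' := by
          apply Subtype.ext
          rw [MulAut.conjNormal_apply, MulAut.conjNormal_apply, hzh]
          have hcm := habG _ h0.2 _ a'.2
          calc x * ↑h0 * ↑a' * (x * (h0 : G))⁻¹
              = x * ((h0 : G) * ↑a') * (h0 : G)⁻¹ * x⁻¹ := by group
            _ = x * (↑a' * (h0 : G)) * (h0 : G)⁻¹ * x⁻¹ := by rw [hcm]
            _ = x * ↑a' * x⁻¹ := by group
        have s4 : dz = MulAut.conjNormal x (fhom g hHab h0) * c := by
          apply Subtype.ext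
          push_cast [MulAut.conjNormal_apply, fhom_val, hc, hdz]
          rw [hzh]
          group
        rw [s1]
        constructor
        · intro hh
          have h6 : ((MulAut.conjNormal z a' * dz : ↥H) : G) * g = ((a' : ↥H) : G) * g := by
            rw [← s2, hh, hyval]
          have h7 : (MulAut.conjNormal z a' * dz : ↥H) = a' :=
            Subtype.ext (mul_right_cancel h6)
          rw [s3, s4] at h7
          rw [← conjNormal_fhom_comm habG hHab hxK h0]
          have h8 : MulAut.conjNormal x (fhom g hHab h0)
              = (MulAut.conjNormal x a')⁻¹ * a' * c⁻¹ := by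
            have hfree : MulAut.conjNormal x (fhom g hHab h0)
                = (MulAut.conjNormal x a')⁻¹ *
                  (MulAut.conjNormal x a' * (MulAut.conjNormal x (fhom g hHab h0) * c)) *
                    c⁻¹ := by group
            rw [h7] at hfree
            exact hfree
          rw [h8, hv, mul_comm (MulAut.conjNormal x a')⁻¹ a']
        · intro hh
          have h8 : MulAut.conjNormal x (fhom g hHab h0)
              = (MulAut.conjNormal x a')⁻¹ * a' * c⁻¹ := by
            rw [conjNormal_fhom_comm habG hHab hxK h0, hh, hv,
              mul_comm (MulAut.conjNormal x a')⁻¹ a']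
          have h7 : MulAut.conjNormal x a' * (MulAut.conjNormal x (fhom g hHab h0) * c)
              = a' := by
            rw [h8]; group
          rw [s2, s3, s4, h7, hyval]
      -- the three equivalences
      have E1 : {s : ↥C1 // (s : Ghat).right = ((x : G) : G ⧸ H)}
          ≃ {b : ↥H // fhom g hHab b = w1} :=
        { toFun := fun s => ⟨((s.1 : Ghat)).left, by
            have hm := Subgroup.mem_centralizer_iff.mp s.1.2 xhat rfl
            have hleft := congrArg SemidirectProduct.left hm
            rw [SemidirectProduct.mul_left, SemidirectProduct.mul_left] at hleft
            have hl2 : a * quotConj G H ((g : G) : G ⧸ H) ((s.1 : Ghat)).left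
                = ((s.1 : Ghat)).left * quotConj G H ((s.1 : Ghat)).right a := hleft
            rw [s.2, hφg, hφu] at hl2
            exact (hiffA _).mp hl2⟩
          invFun := fun b => ⟨⟨⟨b.1, ((x : G) : G ⧸ H)⟩, by
            rw [hC1def, Subgroup.mem_centralizer_iff]
            intro w hw
            rw [Set.mem_singleton_iff] at hw
            subst hw
            have hl : a * MulAut.conjNormal g b.1 = b.1 * MulAut.conjNormal x a :=
              (hiffA _).mpr b.2
            apply SemidirectProduct.ext
            · show a * quotConj G H ((g : G) : G ⧸ H) b.1
                = b.1 * quotConj G H ((x : G) : G ⧸ H) a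
              rw [hφg, hφu]
              exact hl
            · exact hcomm.symm⟩, rfl⟩
          left_inv := fun s => by
            apply Subtype.ext
            apply Subtype.ext
            exact SemidirectProduct.ext rfl s.2.symm
          right_inv := fun b => rfl }
      have hmem0 : ∀ z : ↥C2, ((z : G) : G ⧸ H) = ((x : G) : G ⧸ H) →
          x⁻¹ * (z : G) ∈ H := by
        intro z hz
        rw [← QuotientGroup.eq_one_iff, QuotientGroup.mk_mul, QuotientGroup.mk_inv, hz]
        group
      have E2 : {z : ↥C2 // ((z : G) : G ⧸ H) = ((x : G) : G ⧸ H)}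
          ≃ {b : ↥H // fhom g hHab b = v} :=
        { toFun := fun z => ⟨MulAut.conjNormal x ⟨x⁻¹ * (z.1 : G), hmem0 z.1 z.2⟩, by
            have hzH : (z.1 : G) * g * (z.1 : G)⁻¹ * g⁻¹ ∈ H := by
              apply mk_comm_iff.mp
              rw [z.2]
              exact hcomm
            have hzy : y * (z.1 : G) = (z.1 : G) * y :=
              Subgroup.mem_centralizer_iff.mp z.1.2 y rfl
            exact (cond_iff (z.1 : G) hzH ⟨x⁻¹ * (z.1 : G), hmem0 z.1 z.2⟩
              (by show (z.1 : G) = x * (x⁻¹ * (z.1 : G)); group)).mp hzy⟩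
          invFun := fun b => ⟨⟨(b.1 : G) * x, by
            rw [hC2def, Subgroup.mem_centralizer_iff]
            intro w hw
            rw [Set.mem_singleton_iff] at hw
            subst hw
            have hmem1 : ((b.1 : G) * x) * g * ((b.1 : G) * x)⁻¹ * g⁻¹ ∈ H := by
              apply mk_comm_iff.mp
              rw [QuotientGroup.mk_mul, (QuotientGroup.eq_one_iff _).mpr b.1.2, one_mul]
              exact hcomm
            have hs : MulAut.conjNormal x ((MulAut.conjNormal x)⁻¹ b.1) = b.1 := by
              apply Subtype.ext
              rw [MulAut.conjNormal_apply, MulAut.conjNormal_inv_apply]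
              group
            exact (cond_iff ((b.1 : G) * x) hmem1 ((MulAut.conjNormal x)⁻¹ b.1) (by
              apply_fun (fun r => (r : G)) at hs
              rw [MulAut.conjNormal_apply] at hs
              rw [MulAut.conjNormal_inv_apply]
              group)).mpr (by rw [hs]; exact b.2)⟩, by
            rw [QuotientGroup.mk_mul, (QuotientGroup.eq_one_iff _).mpr b.1.2, one_mul]⟩
          left_inv := fun z => by
            apply Subtype.ext
            apply Subtype.ext
            show (MulAut.conjNormal x (⟨x⁻¹ * (z.1 : G), hmem0 z.1 z.2⟩ : ↥H) : G) * x
              = (z.1 : G)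
            rw [MulAut.conjNormal_apply]
            show x * (x⁻¹ * (z.1 : G)) * x⁻¹ * x = (z.1 : G)
            group
          right_inv := fun b => by
            apply Subtype.ext
            apply Subtype.ext
            rw [MulAut.conjNormal_apply]
            show x * (x⁻¹ * ((b.1 : G) * x)) * x⁻¹ = (b.1 : G)
            group }
      have key : ∀ A B C D E : ↥H, A * B * (C * D)⁻¹ * (D⁻¹ * B * E)⁻¹ = A * C⁻¹ * E⁻¹ :=
        fun A B C D E => by
          simp only [mul_inv_rev, inv_inv]
          calc A * B * (D⁻¹ * C⁻¹) * (E⁻¹ * (B⁻¹ * D))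
              = (B * B⁻¹) * (D⁻¹ * D) * (A * C⁻¹ * E⁻¹) := by
                simp only [mul_comm, mul_left_comm, mul_assoc]
            _ = A * C⁻¹ * E⁻¹ := by group
      have hvw : v = w1 * fhom g hHab u0⁻¹ := by
        rw [hv, hw1, hu0, ha', map_mul, map_inv]
        exact key a t (MulAut.conjNormal x a) (MulAut.conjNormal x t) (fhom g hHab u0)
      have E3 : {b : ↥H // fhom g hHab b = v} ≃ {b : ↥H // fhom g hHab b = w1} :=
        { toFun := fun b => ⟨b.1 * u0, by rw [map_mul, b.2, hvw, map_inv]; group⟩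
          invFun := fun b => ⟨b.1 * u0⁻¹, by rw [map_mul, b.2, hvw]⟩
          left_inv := fun b => Subtype.ext (by group)
          right_inv := fun b => Subtype.ext (by group) }
      exact ⟨E1.trans (E3.symm.trans E2.symm)⟩
    · -- non-commuting case: both fibers empty
      have hempty1 : IsEmpty {s : ↥C1 // (s : Ghat).right = u} := by
        refine ⟨fun s => hcomm ?_⟩
        have hm := Subgroup.mem_centralizer_iff.mp s.1.2 xhat rfl
        have hr := congrArg SemidirectProduct.right hm
        rw [SemidirectProduct.mul_right, SemidirectProduct.mul_right] at hr
        have hr2 : ((g : G) : G ⧸ H) * ((s.1 : Ghat)).right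
            = ((s.1 : Ghat)).right * ((g : G) : G ⧸ H) := hr
        rw [s.2] at hr2
        exact hr2.symm
      have hempty2 : IsEmpty {z : ↥C2 // ((z : G) : G ⧸ H) = u} := by
        refine ⟨fun z => hcomm ?_⟩
        have hm := Subgroup.mem_centralizer_iff.mp z.1.2 y rfl
        have hr := congrArg (fun w : G => ((w : G ⧸ H))) hm
        simp only [QuotientGroup.mk_mul] at hr
        rw [z.2, hky] at hr
        exact hr.symm
      exact ⟨Equiv.equivOfIsEmpty _ _⟩
  have hcardC : Nat.card ↥C1 = Nat.card ↥C2 := by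
    have e1 := (Equiv.sigmaFiberEquiv (fun s : ↥C1 => (s : Ghat).right)).symm
    have em := Equiv.sigmaCongrRight (fun u => Classical.choice (hfib u))
    exact Nat.card_congr ((e1.trans em).trans
      (Equiv.sigmaFiberEquiv (fun z : ↥C2 => ((z : G) : G ⧸ H))))
  refine ⟨y, ?_⟩
  rw [hxh]
  have h1 := Subgroup.card_mul_index C1
  have h2 := Subgroup.card_mul_index C2
  rw [hcardG, ← h2, hcardC] at h1
  have hpos : 0 < Nat.card ↥C2 := Nat.card_pos
  exact Nat.eq_of_mul_eq_mul_left hpos h1
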